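/- Let μ > 0 and n = 3/2 + μ. There exists a constant C > 0 such that for every measurable nonnegative function f : ℝ³ × ℝ³ → ℝ, defining ρ_f(x) = ∫ f(x,v) dv, one has ∫ ρ_f(x)^{1+1/n} dx ≤ C ( ∫∫ f(x,v)^{1+1/μ} dv dx + ∫∫ |v|² f(x,v) dv dx ). -/

import Mathlib

open MeasureTheory Real ENNReal
noncomputable section
abbrev Space := EuclideanSpace ℝ (Fin 3)

lemma near_bound (g : Space → ℝ≥0∞) (hg : Measurable g) {p pc : ℝ}
    (hpq : p.HolderConjugate pc) (R : ℝ) :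
    ∫⁻ v in Metric.ball (0:Space) R, g v ≤
      (∫⁻ v, g v ^ p) ^ (1/p) * (volume (Metric.ball (0:Space) R)) ^ (1/pc) := by
  have h := ENNReal.lintegral_mul_le_Lp_mul_Lq (volume.restrict (Metric.ball (0:Space) R))
    hpq hg.aemeasurable (aemeasurable_const (b := (1:ℝ≥0∞)))
  simp only [Pi.mul_apply, mul_one, ENNReal.one_rpow, lintegral_const,
    Measure.restrict_apply_univ, one_mul] at h
  refine h.trans (mul_le_mul_left (ENNReal.rpow_le_rpow (setLIntegral_le_lintegral _ _)
    (by exact one_div_nonneg.mpr hpq.pos.le)) _)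

lemma tail_bound (g : Space → ℝ≥0∞) {R : ℝ} (hR : 0 < R) :
    ∫⁻ v in (Metric.ball (0:Space) R)ᶜ, g v ≤
      ENNReal.ofReal (R ^ (2:ℝ))⁻¹ * ∫⁻ v, ENNReal.ofReal (‖v‖ ^ 2) * g v := by
  have hR2 : (0:ℝ) < R ^ (2:ℝ) := Real.rpow_pos_of_pos hR _
  have key : ∀ v : Space, v ∈ (Metric.ball (0:Space) R)ᶜ →
      g v ≤ ENNReal.ofReal (R ^ (2:ℝ))⁻¹ * (ENNReal.ofReal (‖v‖ ^ 2) * g v) := by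
    intro v hv
    have hvR : R ≤ ‖v‖ := by
      simpa [Metric.mem_ball, dist_zero_right] using hv
    have h1 : (1:ℝ≥0∞) ≤ ENNReal.ofReal (R ^ (2:ℝ))⁻¹ * ENNReal.ofReal (‖v‖ ^ 2) := by
      have : ENNReal.ofReal (R ^ (2:ℝ)) ≤ ENNReal.ofReal (‖v‖ ^ 2) := by
        apply ENNReal.ofReal_le_ofReal
        rw [Real.rpow_two]
        exact pow_le_pow_left₀ hR.le hvR 2
      calc (1:ℝ≥0∞) = ENNReal.ofReal (R ^ (2:ℝ))⁻¹ * ENNReal.ofReal (R ^ (2:ℝ)) := by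
            rw [← ENNReal.ofReal_mul (by positivity), inv_mul_cancel₀ hR2.ne', ENNReal.ofReal_one]
        _ ≤ _ := by gcongr
    calc g v = 1 * g v := (one_mul _).symm
      _ ≤ ENNReal.ofReal (R ^ (2:ℝ))⁻¹ * ENNReal.ofReal (‖v‖ ^ 2) * g v := by gcongr
      _ = _ := by ring
  calc ∫⁻ v in (Metric.ball (0:Space) R)ᶜ, g v
      ≤ ∫⁻ v in (Metric.ball (0:Space) R)ᶜ,
          ENNReal.ofReal (R ^ (2:ℝ))⁻¹ * (ENNReal.ofReal (‖v‖ ^ 2) * g v) :=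
        setLIntegral_mono' measurableSet_ball.compl key
    _ ≤ ∫⁻ v, ENNReal.ofReal (R ^ (2:ℝ))⁻¹ * (ENNReal.ofReal (‖v‖ ^ 2) * g v) :=
        setLIntegral_le_lintegral _ _
    _ = _ := lintegral_const_mul' _ _ ENNReal.ofReal_ne_top

set_option maxHeartbeats 1000000 in
lemma pointwise_bound (μ n : ℝ) (hμ : 0 < μ) (hn : n = 3/2 + μ)
    (g : Space → ℝ≥0∞) (hg : Measurable g) :
    (∫⁻ v, g v) ^ (1 + 1/n) ≤
      ((volume (Metric.ball (0:Space) 1)) ^ (1/(1+μ)) + 1) ^ (1 + 1/n) *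
        ((∫⁻ v, g v ^ (1 + 1/μ)) + ∫⁻ v, ENNReal.ofReal (‖v‖ ^ 2) * g v) := by
  have hμ' : μ ≠ 0 := hμ.ne'
  have h1μ : (0:ℝ) < 1 + μ := by linarith
  have h5μ : (0:ℝ) < 5 + 2*μ := by linarith
  have h3μ : (0:ℝ) < 3 + 2*μ := by linarith
  have hn0 : 0 < n := by rw [hn]; linarith
  set p : ℝ := 1 + 1/μ with hp_def
  set pc : ℝ := 1 + μ with hpc_def
  set q : ℝ := 1 + 1/n with hq_def
  have hq0 : 0 < q := by have : 0 < 1/n := by positivity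
                         rw [hq_def]; linarith
  have hp1 : 1 < p := by have : 0 < 1/μ := by positivity
                         rw [hp_def]; linarith
  have hpq : p.HolderConjugate pc := by
    rw [Real.holderConjugate_iff]
    constructor
    · exact hp1
    · rw [hp_def, hpc_def]; field_simp; ring
  set V : ℝ≥0∞ := volume (Metric.ball (0:Space) 1) with hV_def
  have hVt : V ≠ ⊤ := measure_ball_lt_top.ne
  set K : ℝ≥0∞ := (V ^ (1/pc) + 1) ^ q with hK_def
  have hbase : V ^ (1/pc) + 1 ≠ 0 := by simp
  have hK0 : K ≠ 0 := by
    rw [hK_def]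
    intro h
    rcases ENNReal.rpow_eq_zero_iff.mp h with ⟨h1, -⟩ | ⟨-, h2⟩
    · exact hbase h1
    · exact absurd h2 (not_lt.mpr hq0.le)
  set A : ℝ≥0∞ := ∫⁻ v, g v ^ p with hA_def
  set B : ℝ≥0∞ := ∫⁻ v, ENNReal.ofReal (‖v‖ ^ 2) * g v with hB_def
  set ρ : ℝ≥0∞ := ∫⁻ v, g v with hρ_def
  by_cases hA0 : A = 0
  · have hgm : Measurable fun v => g v ^ p := hg.pow measurable_const
    have h0 := (lintegral_eq_zero_iff hgm).mp hA0
    have hg0 : g =ᵐ[volume] 0 := by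
      filter_upwards [h0] with v hv
      simp only [Pi.zero_apply] at hv ⊢
      rcases (ENNReal.rpow_eq_zero_iff.mp hv) with ⟨h, -⟩ | ⟨-, h⟩
      · exact h
      · exact absurd h (not_lt.mpr (by positivity))
    have : ρ = 0 := by rw [hρ_def, lintegral_congr_ae hg0]; simp
    rw [this, ENNReal.zero_rpow_of_pos hq0]
    exact zero_le
  by_cases hB0 : B = 0
  · have hwm : Measurable fun v : Space => ENNReal.ofReal (‖v‖ ^ 2) * g v :=
      ((measurable_norm.pow measurable_const).ennreal_ofReal).mul hg
    have h0 := (lintegral_eq_zero_iff hwm).mp hB0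
    have hne : ∀ᵐ v : Space, v ≠ 0 := by
      rw [ae_iff]
      simpa using measure_singleton (0:Space)
    have hg0 : g =ᵐ[volume] 0 := by
      filter_upwards [h0, hne] with v hv hv0
      simp only [Pi.zero_apply] at hv ⊢
      rcases mul_eq_zero.mp hv with h | h
      · exact absurd h (by simp [ENNReal.ofReal_eq_zero, not_le, pow_pos, norm_pos_iff.mpr hv0, hv0])
      · exact h
    have : ρ = 0 := by rw [hρ_def, lintegral_congr_ae hg0]; simp
    rw [this, ENNReal.zero_rpow_of_pos hq0]
    exact zero_le
  by_cases hAt : A = ⊤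
  · rw [hAt, top_add, ENNReal.mul_top hK0]; exact le_top
  by_cases hBt : B = ⊤
  · rw [hBt, add_top, ENNReal.mul_top hK0]; exact le_top
  -- main case
  set a : ℝ := A.toReal with ha_def
  set b : ℝ := B.toReal with hb_def
  have ha : 0 < a := ENNReal.toReal_pos hA0 hAt
  have hb : 0 < b := ENNReal.toReal_pos hB0 hBt
  have hA : A = ENNReal.ofReal a := (ENNReal.ofReal_toReal hAt).symm
  have hB : B = ENNReal.ofReal b := (ENNReal.ofReal_toReal hBt).symm
  set s : ℝ := 3/pc + 2 with hs_def
  have hs : 0 < s := by rw [hs_def, hpc_def]; positivity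
  set R : ℝ := b ^ (1/s) * a ^ (-(1/(p*s))) with hR_def
  have hR : 0 < R := by rw [hR_def]; positivity
  set α : ℝ := 2*μ/(5+2*μ) with hα_def
  set β : ℝ := 3/(5+2*μ) with hβ_def
  set E : ℝ := a ^ α * b ^ β with hE_def
  have hE : 0 < E := by rw [hE_def]; positivity
  -- real identity I
  have hI : a ^ (1/p) * R ^ (3/pc) = E := by
    rw [hE_def, hR_def, Real.mul_rpow (by positivity) (by positivity),
      ← Real.rpow_mul hb.le, ← Real.rpow_mul ha.le, mul_comm (b ^ _) _, ← mul_assoc,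
      ← Real.rpow_add ha]
    rw [mul_comm (a ^ _) _, mul_comm (a ^ α) _]
    congr 1
    · congr 1
      rw [hβ_def, hs_def, hpc_def]; field_simp; ring
    · congr 1
      rw [hα_def, hs_def, hpc_def, hp_def]; field_simp; ring
  -- real identity II
  have hII : (R ^ (2:ℝ))⁻¹ * b = E := by
    rw [← Real.rpow_neg hR.le, hE_def, hR_def,
      Real.mul_rpow (by positivity) (by positivity),
      ← Real.rpow_mul hb.le, ← Real.rpow_mul ha.le]
    calc b ^ (1/s * (-2)) * a ^ (-(1/(p*s)) * (-2)) * b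
        = a ^ (-(1/(p*s)) * (-2)) * (b ^ (1/s * (-2)) * b ^ (1:ℝ)) := by
          rw [Real.rpow_one]; ring
      _ = a ^ (-(1/(p*s)) * (-2)) * b ^ (1/s * (-2) + 1) := by
          rw [← Real.rpow_add hb]
      _ = a ^ α * b ^ β := by
          congr 1
          · congr 1
            rw [hα_def, hs_def, hpc_def, hp_def]; field_simp; ring
          · congr 1
            rw [hβ_def, hs_def, hpc_def]; field_simp; ring
  -- combine
  have hρE : ρ ≤ ENNReal.ofReal E * (V ^ (1/pc) + 1) := by
    have hsplit : ρ = (∫⁻ v in Metric.ball (0:Space) R, g v)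
        + ∫⁻ v in (Metric.ball (0:Space) R)ᶜ, g v :=
      (lintegral_add_compl g measurableSet_ball).symm
    have hball : volume (Metric.ball (0:Space) R) = ENNReal.ofReal (R ^ (3:ℝ)) * V := by
      rw [Measure.addHaar_ball_of_pos volume 0 hR, finrank_euclideanSpace_fin, hV_def,
        ← Real.rpow_natCast R 3]
      norm_num
    have hterm1 : (∫⁻ v, g v ^ p) ^ (1/p) * (volume (Metric.ball (0:Space) R)) ^ (1/pc)
        = ENNReal.ofReal E * V ^ (1/pc) := by
      rw [hball, ENNReal.mul_rpow_of_nonneg _ _ (by positivity : (0:ℝ) ≤ 1/pc),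
        ENNReal.ofReal_rpow_of_pos (by positivity), ← Real.rpow_mul hR.le,
        ← hA_def, hA, ENNReal.ofReal_rpow_of_pos ha, ← mul_assoc,
        ← ENNReal.ofReal_mul (by positivity)]
      rw [show (3:ℝ) * (1/pc) = 3/pc by ring, hI]
    have hterm2 : ENNReal.ofReal (R ^ (2:ℝ))⁻¹ * B = ENNReal.ofReal E := by
      rw [hB, ← ENNReal.ofReal_mul (by positivity), hII]
    calc ρ = (∫⁻ v in Metric.ball (0:Space) R, g v)
          + ∫⁻ v in (Metric.ball (0:Space) R)ᶜ, g v := hsplit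
      _ ≤ (∫⁻ v, g v ^ p) ^ (1/p) * (volume (Metric.ball (0:Space) R)) ^ (1/pc)
          + ENNReal.ofReal (R ^ (2:ℝ))⁻¹ * B :=
        add_le_add (near_bound g hg hpq R) (tail_bound g hR)
      _ = ENNReal.ofReal E * V ^ (1/pc) + ENNReal.ofReal E := by rw [hterm1, hterm2]
      _ = ENNReal.ofReal E * (V ^ (1/pc) + 1) := by ring
  -- exponent facts
  have hαq : 0 ≤ α * q := by rw [hα_def]; positivity
  have hβq : 0 ≤ β * q := by rw [hβ_def]; positivity
  have hsum : α * q + β * q = 1 := by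
    rw [hα_def, hβ_def, hq_def, hn]; field_simp; ring
  have hαq1 : α * q ≤ 1 := by linarith
  have hβq1 : β * q ≤ 1 := by linarith
  -- young
  have hyoung : E ^ q ≤ a + b := by
    have h1 : E ^ q = a ^ (α*q) * b ^ (β*q) := by
      rw [hE_def, Real.mul_rpow (by positivity) (by positivity),
        ← Real.rpow_mul ha.le, ← Real.rpow_mul hb.le]
    have h2 := Real.geom_mean_le_arith_mean2_weighted hαq hβq ha.le hb.le hsum
    calc E ^ q = a ^ (α*q) * b ^ (β*q) := h1
      _ ≤ (α*q) * a + (β*q) * b := h2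
      _ ≤ 1 * a + 1 * b := by gcongr
      _ = a + b := by ring
  calc ρ ^ q ≤ (ENNReal.ofReal E * (V ^ (1/pc) + 1)) ^ q :=
        ENNReal.rpow_le_rpow hρE hq0.le
    _ = ENNReal.ofReal E ^ q * (V ^ (1/pc) + 1) ^ q :=
        ENNReal.mul_rpow_of_nonneg _ _ hq0.le
    _ = ENNReal.ofReal (E ^ q) * K := by rw [ENNReal.ofReal_rpow_of_pos hE, hK_def]
    _ ≤ ENNReal.ofReal (a + b) * K :=
        mul_le_mul_left (ENNReal.ofReal_le_ofReal hyoung) K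
    _ = K * (A + B) := by
        rw [ENNReal.ofReal_add ha.le hb.le, ← hA, ← hB]; ring

/-- interpolation bound for the spatial density:
for `μ > 0` and `n = 3/2 + μ` there is `C > 0` such that for every measurable
`f : ℝ³ × ℝ³ → [0,∞]`, with `ρ_f x = ∫ f (x,v) dv`,
`∫ ρ_f ^ (1+1/n) ≤ C (∫∫ f^(1+1/μ) + ∫∫ |v|² f)`. -/
theorem density_interpolation_bound (μ n : ℝ) (hμ : 0 < μ) (hn : n = 3/2 + μ) :
    ∃ C : ℝ, 0 < C ∧
      ∀ f : Space × Space → ℝ≥0∞, Measurable f →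
        ∫⁻ x : Space, (∫⁻ v : Space, f (x, v)) ^ (1 + 1/n) ≤
          ENNReal.ofReal C *
            ((∫⁻ p : Space × Space, f p ^ (1 + 1/μ)) +
              ∫⁻ p : Space × Space, ENNReal.ofReal (‖p.2‖ ^ 2) * f p) := by
  have h1μ : (0:ℝ) < 1 + μ := by linarith
  have hn0 : 0 < n := by rw [hn]; linarith
  have hq0 : (0:ℝ) < 1 + 1/n := by positivity
  set V : ℝ≥0∞ := volume (Metric.ball (0:Space) 1) with hV_def
  have hVt : V ≠ ⊤ := measure_ball_lt_top.ne
  set K : ℝ≥0∞ := (V ^ (1/(1+μ)) + 1) ^ (1 + 1/n) with hK_def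
  have hK0 : K ≠ 0 := by
    rw [hK_def]
    intro h
    rcases ENNReal.rpow_eq_zero_iff.mp h with ⟨h1, -⟩ | ⟨-, h2⟩
    · simp at h1
    · exact absurd h2 (not_lt.mpr hq0.le)
  have hKt : K ≠ ⊤ := by
    rw [hK_def]
    exact ENNReal.rpow_ne_top_of_nonneg hq0.le
      (ENNReal.add_ne_top.mpr
        ⟨ENNReal.rpow_ne_top_of_nonneg (by positivity) hVt, ENNReal.one_ne_top⟩)
  refine ⟨K.toReal, ENNReal.toReal_pos hK0 hKt, ?_⟩
  intro f hf
  rw [ENNReal.ofReal_toReal hKt]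
  have hfp : Measurable fun z : Space × Space => f z ^ (1 + 1/μ) := hf.pow measurable_const
  have hfw : Measurable fun z : Space × Space => ENNReal.ofReal (‖z.2‖ ^ 2) * f z :=
    ((measurable_snd.norm.pow measurable_const).ennreal_ofReal).mul hf
  have hAm : Measurable fun x : Space => ∫⁻ v, f (x, v) ^ (1 + 1/μ) :=
    hfp.lintegral_prod_right'
  calc ∫⁻ x : Space, (∫⁻ v : Space, f (x, v)) ^ (1 + 1/n)
      ≤ ∫⁻ x : Space, K * ((∫⁻ v, f (x, v) ^ (1 + 1/μ))
          + ∫⁻ v, ENNReal.ofReal (‖v‖ ^ 2) * f (x, v)) :=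
        lintegral_mono fun x => pointwise_bound μ n hμ hn (fun v => f (x, v))
          (hf.comp measurable_prodMk_left)
    _ = K * ∫⁻ x : Space, ((∫⁻ v, f (x, v) ^ (1 + 1/μ))
          + ∫⁻ v, ENNReal.ofReal (‖v‖ ^ 2) * f (x, v)) :=
        lintegral_const_mul' _ _ hKt
    _ = K * ((∫⁻ x : Space, ∫⁻ v, f (x, v) ^ (1 + 1/μ))
          + ∫⁻ x : Space, ∫⁻ v, ENNReal.ofReal (‖v‖ ^ 2) * f (x, v)) := by
        rw [lintegral_add_left hAm]
    _ = K * ((∫⁻ p : Space × Space, f p ^ (1 + 1/μ))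
          + ∫⁻ p : Space × Space, ENNReal.ofReal (‖p.2‖ ^ 2) * f p) := by
        rw [Measure.volume_eq_prod, lintegral_prod _ hfp.aemeasurable,
          lintegral_prod _ hfw.aemeasurable]
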